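/- For every real X ≥ 1, the number of quadruples (x₁,x₂,x₃,x₄) of positive integers with x₁,x₂,x₃,x₄ ≤ X and x₁x₂ = x₃x₄ equals Σ_{1≤a,b≤X, gcd(a,b)=1} ⌊X/max(a,b)⌋². -/

import Mathlib

open Finset


private lemma key_div {x₁ x₂ x₃ x₄ : ℕ} (h1 : 0 < x₁) (h3 : 0 < x₃)
    (heq : x₁ * x₂ = x₃ * x₄) :
    (x₃ / Nat.gcd x₁ x₃) ∣ x₂ ∧
      x₄ = (x₂ / (x₃ / Nat.gcd x₁ x₃)) * (x₁ / Nat.gcd x₁ x₃) := by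
  set g := Nat.gcd x₁ x₃ with hg
  have hg0 : 0 < g := Nat.gcd_pos_of_pos_left _ h1
  set a := x₁ / g with ha
  set b := x₃ / g with hb
  have hax : g * a = x₁ := Nat.mul_div_cancel' (Nat.gcd_dvd_left _ _)
  have hbx : g * b = x₃ := Nat.mul_div_cancel' (Nat.gcd_dvd_right _ _)
  have hb0 : 0 < b := by
    rcases Nat.eq_zero_or_pos b with h | h
    · exfalso; rw [h, mul_zero] at hbx; omega
    · exact h
  have hab : Nat.Coprime a b := Nat.coprime_div_gcd_div_gcd hg0
  have hmain : a * x₂ = b * x₄ := by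
    apply Nat.eq_of_mul_eq_mul_left hg0
    calc g * (a * x₂) = (g * a) * x₂ := by ring
    _ = x₃ * x₄ := by rw [hax, heq]
    _ = g * (b * x₄) := by rw [← hbx]; ring
  have hbd : b ∣ x₂ := Nat.Coprime.dvd_of_dvd_mul_left hab.symm ⟨x₄, hmain⟩
  refine ⟨hbd, ?_⟩
  have hl : (x₂ / b) * b = x₂ := Nat.div_mul_cancel hbd
  apply Nat.eq_of_mul_eq_mul_left hb0
  calc b * x₄ = a * x₂ := hmain.symm
  _ = a * ((x₂ / b) * b) := by rw [hl]
  _ = b * (x₂ / b * a) := by ring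

private lemma quad_count (N : ℕ) :
    (((Icc 1 N ×ˢ Icc 1 N ×ˢ Icc 1 N ×ˢ Icc 1 N).filter
      fun p : ℕ × ℕ × ℕ × ℕ => p.1 * p.2.1 = p.2.2.1 * p.2.2.2).card) =
    ∑ a ∈ Icc 1 N, ∑ b ∈ Icc 1 N,
      if Nat.gcd a b = 1 then (N / max a b) ^ 2 else 0 := by
  have key : ∑ a ∈ Icc 1 N, ∑ b ∈ Icc 1 N,
      (if Nat.gcd a b = 1 then (N / max a b) ^ 2 else 0) =
      ((((Icc 1 N ×ˢ Icc 1 N).filter fun ab : ℕ × ℕ => Nat.gcd ab.1 ab.2 = 1).sigma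
        fun ab => Icc 1 (N / max ab.1 ab.2) ×ˢ Icc 1 (N / max ab.1 ab.2)).card) := by
    rw [Finset.card_sigma, Finset.sum_filter, Finset.sum_product]
    simp [Nat.card_Icc, sq]
  rw [key]
  symm
  apply Finset.card_bij'
    (i := fun (q : Σ _ : ℕ × ℕ, ℕ × ℕ) _ =>
      (q.2.1 * q.1.1, q.2.2 * q.1.2, q.2.1 * q.1.2, q.2.2 * q.1.1))
    (j := fun (p : ℕ × ℕ × ℕ × ℕ) _ =>
      ⟨(p.1 / Nat.gcd p.1 p.2.2.1, p.2.2.1 / Nat.gcd p.1 p.2.2.1),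
        (Nat.gcd p.1 p.2.2.1, p.2.1 / (p.2.2.1 / Nat.gcd p.1 p.2.2.1))⟩)
  · -- hi
    rintro ⟨⟨a, b⟩, k, l⟩ hq
    simp only [Finset.mem_sigma, Finset.mem_filter, Finset.mem_product, Finset.mem_Icc] at hq ⊢
    obtain ⟨⟨⟨⟨ha1, haN⟩, hb1, hbN⟩, hcop⟩, ⟨hk1, hkd⟩, hl1, hld⟩ := hq
    have hm0 : 0 < max a b := lt_of_lt_of_le ha1 (le_max_left a b)
    have hkm : k * max a b ≤ N := (Nat.le_div_iff_mul_le hm0).mp hkd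
    have hlm : l * max a b ≤ N := (Nat.le_div_iff_mul_le hm0).mp hld
    refine ⟨⟨⟨?_, ?_⟩, ⟨?_, ?_⟩, ⟨?_, ?_⟩, ?_, ?_⟩, by ring⟩
    · exact Nat.one_le_iff_ne_zero.mpr (by positivity)
    · exact le_trans (Nat.mul_le_mul_left k (le_max_left a b)) hkm
    · exact Nat.one_le_iff_ne_zero.mpr (by positivity)
    · exact le_trans (Nat.mul_le_mul_left l (le_max_right a b)) hlm
    · exact Nat.one_le_iff_ne_zero.mpr (by positivity)
    · exact le_trans (Nat.mul_le_mul_left k (le_max_right a b)) hkm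
    · exact Nat.one_le_iff_ne_zero.mpr (by positivity)
    · exact le_trans (Nat.mul_le_mul_left l (le_max_left a b)) hlm
  · -- hj
    rintro ⟨x₁, x₂, x₃, x₄⟩ hp
    simp only [Finset.mem_filter, Finset.mem_product, Finset.mem_Icc] at hp
    obtain ⟨⟨⟨h11, h1N⟩, ⟨h21, h2N⟩, ⟨h31, h3N⟩, h41, h4N⟩, heq⟩ := hp
    obtain ⟨hbd, hx4⟩ := key_div (by omega) (by omega) heq
    set g := Nat.gcd x₁ x₃ with hgdef
    have hg0 : 0 < g := Nat.gcd_pos_of_pos_left _ (by omega)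
    set a := x₁ / g with ha
    set b := x₃ / g with hb
    have hax : g * a = x₁ := Nat.mul_div_cancel' (Nat.gcd_dvd_left _ _)
    have hbx : g * b = x₃ := Nat.mul_div_cancel' (Nat.gcd_dvd_right _ _)
    have ha0 : 0 < a := by
      rcases Nat.eq_zero_or_pos a with h | h
      · exfalso; rw [h, mul_zero] at hax; omega
      · exact h
    have hb0 : 0 < b := by
      rcases Nat.eq_zero_or_pos b with h | h
      · exfalso; rw [h, mul_zero] at hbx; omega
      · exact h
    have hm0 : 0 < max a b := lt_of_lt_of_le ha0 (le_max_left a b)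
    have hlb : (x₂ / b) * b = x₂ := Nat.div_mul_cancel hbd
    have hgm : g * max a b ≤ N := by
      rcases le_total a b with h | h
      · rw [max_eq_right h]; omega
      · rw [max_eq_left h]; omega
    have hlm : (x₂ / b) * max a b ≤ N := by
      rcases le_total a b with h | h
      · rw [max_eq_right h]; omega
      · rw [max_eq_left h]; omega
    simp only [Finset.mem_sigma, Finset.mem_filter, Finset.mem_product, Finset.mem_Icc]
    refine ⟨⟨⟨⟨ha0, ?_⟩, hb0, ?_⟩, Nat.coprime_div_gcd_div_gcd hg0⟩,
      ⟨hg0, (Nat.le_div_iff_mul_le hm0).mpr hgm⟩,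
      Nat.div_pos (Nat.le_of_dvd (by omega) hbd) hb0,
      (Nat.le_div_iff_mul_le hm0).mpr hlm⟩
    · calc a ≤ g * a := Nat.le_mul_of_pos_left a hg0
      _ ≤ N := by omega
    · calc b ≤ g * b := Nat.le_mul_of_pos_left b hg0
      _ ≤ N := by omega
  · -- left_inv
    rintro ⟨⟨a, b⟩, k, l⟩ hq
    simp only [Finset.mem_sigma, Finset.mem_filter, Finset.mem_product, Finset.mem_Icc] at hq
    obtain ⟨⟨⟨⟨ha1, haN⟩, hb1, hbN⟩, hcop⟩, ⟨hk1, hkd⟩, hl1, hld⟩ := hq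
    have hg : Nat.gcd (k * a) (k * b) = k := by
      rw [Nat.gcd_mul_left, hcop, mul_one]
    simp only [hg]
    rw [Nat.mul_div_cancel_left a hk1, Nat.mul_div_cancel_left b hk1,
      Nat.mul_div_cancel l hb1]
  · -- right_inv
    rintro ⟨x₁, x₂, x₃, x₄⟩ hp
    simp only [Finset.mem_filter, Finset.mem_product, Finset.mem_Icc] at hp
    obtain ⟨⟨⟨h11, h1N⟩, ⟨h21, h2N⟩, ⟨h31, h3N⟩, h41, h4N⟩, heq⟩ := hp
    obtain ⟨hbd, hx4⟩ := key_div (by omega) (by omega) heq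
    have hax : Nat.gcd x₁ x₃ * (x₁ / Nat.gcd x₁ x₃) = x₁ :=
      Nat.mul_div_cancel' (Nat.gcd_dvd_left _ _)
    have hbx : Nat.gcd x₁ x₃ * (x₃ / Nat.gcd x₁ x₃) = x₃ :=
      Nat.mul_div_cancel' (Nat.gcd_dvd_right _ _)
    have hlb : (x₂ / (x₃ / Nat.gcd x₁ x₃)) * (x₃ / Nat.gcd x₁ x₃) = x₂ :=
      Nat.div_mul_cancel hbd
    simp only [Prod.mk.injEq]
    exact ⟨hax, hlb, hbx, hx4.symm⟩


theorem multiplicative_quadruple_count (X : ℝ) (hX : 1 ≤ X) :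
    (Nat.card {p : ℤ × ℤ × ℤ × ℤ //
      0 < p.1 ∧ 0 < p.2.1 ∧ 0 < p.2.2.1 ∧ 0 < p.2.2.2 ∧
      (p.1 : ℝ) ≤ X ∧ (p.2.1 : ℝ) ≤ X ∧ (p.2.2.1 : ℝ) ≤ X ∧ (p.2.2.2 : ℝ) ≤ X ∧
      p.1 * p.2.1 = p.2.2.1 * p.2.2.2}) =
    ∑ a ∈ Finset.Icc 1 ⌊X⌋₊, ∑ b ∈ Finset.Icc 1 ⌊X⌋₊,
      if Nat.gcd a b = 1 then (⌊X / (max a b : ℕ)⌋₊) ^ 2 else 0 := by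
  classical
  have hX0 : (0:ℝ) ≤ X := le_trans zero_le_one hX
  set N := ⌊X⌋₊ with hN
  have hmem : ∀ x : ℤ, (0 < x ∧ (x:ℝ) ≤ X) ↔ (1 ≤ x.toNat ∧ x.toNat ≤ N) := by
    intro x
    constructor
    · rintro ⟨hx, hxX⟩
      refine ⟨by omega, ?_⟩
      rw [hN]
      apply Nat.le_floor
      have : ((x.toNat : ℝ)) = (x : ℝ) := by exact_mod_cast Int.toNat_of_nonneg hx.le
      rw [this]; exact hxX
    · rintro ⟨h1, h2⟩
      have hx : 0 < x := by omega
      refine ⟨hx, ?_⟩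
      have h3 : ((x.toNat : ℝ)) ≤ (N : ℝ) := by exact_mod_cast h2
      have h4 : ((N : ℝ)) ≤ X := Nat.floor_le hX0
      have h5 : ((x.toNat : ℝ)) = (x : ℝ) := by exact_mod_cast Int.toNat_of_nonneg hx.le
      linarith
  have hle : ∀ n : ℕ, n ≤ N → (((n : ℤ) : ℝ)) ≤ X := by
    intro n hn
    have h3 : ((n : ℝ)) ≤ (N : ℝ) := by exact_mod_cast hn
    have h4 : ((N : ℝ)) ≤ X := Nat.floor_le hX0
    push_cast
    linarith
  have hcard : Nat.card {p : ℤ × ℤ × ℤ × ℤ //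
      0 < p.1 ∧ 0 < p.2.1 ∧ 0 < p.2.2.1 ∧ 0 < p.2.2.2 ∧
      (p.1 : ℝ) ≤ X ∧ (p.2.1 : ℝ) ≤ X ∧ (p.2.2.1 : ℝ) ≤ X ∧ (p.2.2.2 : ℝ) ≤ X ∧
      p.1 * p.2.1 = p.2.2.1 * p.2.2.2} =
      (((Icc 1 N ×ˢ Icc 1 N ×ˢ Icc 1 N ×ˢ Icc 1 N).filter
        fun p : ℕ × ℕ × ℕ × ℕ => p.1 * p.2.1 = p.2.2.1 * p.2.2.2).card) := by
    rw [← Nat.card_eq_finsetCard]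
    apply Nat.card_congr
    refine
      { toFun := fun q => ⟨(q.1.1.toNat, q.1.2.1.toNat, q.1.2.2.1.toNat, q.1.2.2.2.toNat), ?_⟩
        invFun := fun q => ⟨((q.1.1 : ℤ), (q.1.2.1 : ℤ), (q.1.2.2.1 : ℤ), (q.1.2.2.2 : ℤ)), ?_⟩
        left_inv := ?_
        right_inv := ?_ }
    · obtain ⟨⟨x₁, x₂, x₃, x₄⟩, h1, h2, h3, h4, hx1, hx2, hx3, hx4, heq⟩ := q
      simp only [Finset.mem_coe, Finset.mem_filter, Finset.mem_product, Finset.mem_Icc]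
      refine ⟨⟨(hmem x₁).mp ⟨h1, hx1⟩, (hmem x₂).mp ⟨h2, hx2⟩,
        (hmem x₃).mp ⟨h3, hx3⟩, (hmem x₄).mp ⟨h4, hx4⟩⟩, ?_⟩
      have : (x₁.toNat : ℤ) * x₂.toNat = (x₃.toNat : ℤ) * x₄.toNat := by
        rw [Int.toNat_of_nonneg h1.le, Int.toNat_of_nonneg h2.le,
          Int.toNat_of_nonneg h3.le, Int.toNat_of_nonneg h4.le]
        exact heq
      exact_mod_cast this
    · obtain ⟨⟨n₁, n₂, n₃, n₄⟩, hq⟩ := q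
      simp only [Finset.mem_coe, Finset.mem_filter, Finset.mem_product, Finset.mem_Icc] at hq
      obtain ⟨⟨⟨e1, e2⟩, ⟨e3, e4⟩, ⟨e5, e6⟩, e7, e8⟩, heq⟩ := hq
      dsimp only
      refine ⟨?_, ?_, ?_, ?_, ?_, ?_, ?_, ?_, ?_⟩
      · exact_mod_cast e1
      · exact_mod_cast e3
      · exact_mod_cast e5
      · exact_mod_cast e7
      · exact hle n₁ e2
      · exact hle n₂ e4
      · exact hle n₃ e6
      · exact hle n₄ e8
      · exact_mod_cast heq
    · rintro ⟨⟨x₁, x₂, x₃, x₄⟩, h1, h2, h3, h4, _⟩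
      simp only [Subtype.mk.injEq, Prod.mk.injEq]
      exact ⟨Int.toNat_of_nonneg h1.le, Int.toNat_of_nonneg h2.le,
        Int.toNat_of_nonneg h3.le, Int.toNat_of_nonneg h4.le⟩
    · rintro ⟨⟨n₁, n₂, n₃, n₄⟩, hq⟩
      simp only [Subtype.mk.injEq, Prod.mk.injEq]
      exact ⟨Int.toNat_natCast n₁, Int.toNat_natCast n₂, Int.toNat_natCast n₃,
        Int.toNat_natCast n₄⟩
  rw [hcard, quad_count N]
  refine Finset.sum_congr rfl fun a ha => Finset.sum_congr rfl fun b hb => ?_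
  rw [Nat.floor_div_natCast, ← hN]
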